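/- Let α ∈ (0,1) and ε ∈ (0,1). There exists a constant c₁* = c₁*(ε) > 0 such that for all sufficiently large n, P(τ_{n+1} − τ_n + 1 ≥ n^{α/(1−α)+ε}) ≤ 3 e^{−c₁* n^ε}. -/

import Mathlib

open MeasureTheory ProbabilityTheory Real Filter

/-- The points `τ_k = ((1-α) S_k)^{1/(1-α)}` of the Poisson process with rate `t^{-α}`,
where `S_k = E_0 + ⋯ + E_{k-1}` is a sum of i.i.d. rate-1 exponentials. -/
noncomputable def tauPoly (α : ℝ) {Ω : Type*} (E : ℕ → Ω → ℝ) (k : ℕ) (ω : Ω) : ℝ :=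
  ((1 - α) * ∑ i ∈ Finset.range k, E i ω) ^ (1 / (1 - α))

open Set in
lemma rpow_sub_rpow_le_slope {p a b : ℝ} (hp : 1 ≤ p) (ha : 0 ≤ a) (hab : a ≤ b) :
    b ^ p - a ^ p ≤ ((2:ℝ)^p - 1) * b ^ (p - 1) * (b - a) := by
  rcases eq_or_lt_of_le hab with rfl | hlt
  · simp
  have hb : 0 < b := lt_of_le_of_lt ha hlt
  have h := (convexOn_rpow hp).slope_mono_adjacent (show a ∈ Ici (0:ℝ) from ha)
      (mem_Ici.2 (by linarith : (0:ℝ) ≤ 2*b)) hlt (by linarith)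
  have heq : ((2*b) ^ p - b ^ p) / (2*b - b) = ((2:ℝ)^p - 1) * b ^ (p - 1) := by
    rw [show 2*b - b = b by ring, Real.mul_rpow (by norm_num) hb.le, Real.rpow_sub hb,
      Real.rpow_one, sub_div, mul_div_assoc]
    ring
  rw [heq] at h
  exact (div_le_iff₀ (sub_pos.2 hlt)).1 h

section AuxExp
open Set

lemma expMeasure_Ici_aux {x : ℝ} (hx : 0 ≤ x) :
    expMeasure 1 (Set.Ici x) = ENNReal.ofReal (Real.exp (-x)) := by
  have h1 : expMeasure 1 = MeasureTheory.volume.withDensity (exponentialPDF 1) := rfl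
  rw [h1, withDensity_apply _ measurableSet_Ici]
  calc ∫⁻ y in Ici x, exponentialPDF 1 y
      = ∫⁻ y in Ici x, ENNReal.ofReal (rexp (-y)) := by
        refine setLIntegral_congr_fun measurableSet_Ici (fun y hy => ?_)
        rw [exponentialPDF_of_nonneg (le_trans hx hy)]
        norm_num
    _ = ∫⁻ y in Ioi x, ENNReal.ofReal (rexp (-y)) := by
        rw [MeasureTheory.restrict_Ioi_eq_restrict_Ici]
    _ = ENNReal.ofReal (∫ y in Ioi x, rexp (-y)) := by
        rw [← ofReal_integral_eq_lintegral_ofReal]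
        · exact (by simpa using exp_neg_integrableOn_Ioi x one_pos : IntegrableOn (fun y => rexp (-y)) (Ioi x))
        · exact MeasureTheory.ae_of_all _ fun y => (exp_pos _).le
    _ = ENNReal.ofReal (rexp (-x)) := by rw [integral_exp_neg_Ioi]

lemma expMeasure_Iio_zero : expMeasure 1 (Set.Iio 0) = 0 := by
  have h1 : expMeasure 1 = MeasureTheory.volume.withDensity (exponentialPDF 1) := rfl
  rw [h1, withDensity_apply _ measurableSet_Iio]
  exact lintegral_exponentialPDF_of_nonpos le_rfl

lemma expMeasure_lintegral_exp_half :
    ∫⁻ x, ENNReal.ofReal (rexp ((1/2) * x)) ∂(expMeasure 1) = ENNReal.ofReal 2 := by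
  have h1 : expMeasure 1 = MeasureTheory.volume.withDensity (exponentialPDF 1) := rfl
  have hm : Measurable (exponentialPDF 1) := (measurable_exponentialPDFReal 1).ennreal_ofReal
  rw [h1, lintegral_withDensity_eq_lintegral_mul _ hm (by fun_prop)]
  have key : ∀ x : ℝ, exponentialPDF 1 x * ENNReal.ofReal (rexp ((1/2) * x))
      = (Ici (0:ℝ)).indicator (fun y => ENNReal.ofReal (rexp (-(1/2 * y)))) x := by
    intro x
    rw [exponentialPDF_eq]
    by_cases hx : 0 ≤ x
    · rw [if_pos hx, Set.indicator_of_mem (show x ∈ Ici (0:ℝ) from hx),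
        ← ENNReal.ofReal_mul (by positivity)]
      rw [one_mul, ← Real.exp_add]
      ring_nf
    · rw [if_neg hx, Set.indicator_of_notMem (show x ∉ Ici (0:ℝ) from hx),
        ENNReal.ofReal_zero, zero_mul]
  simp only [Pi.mul_apply, key]
  rw [lintegral_indicator measurableSet_Ici _, MeasureTheory.restrict_Ioi_eq_restrict_Ici.symm]
  rw [← ofReal_integral_eq_lintegral_ofReal]
  · congr 1
    have := integral_comp_mul_left_Ioi (fun y => rexp (-y)) 0 (b := 1/2) (by norm_num)
    simp only [mul_zero, smul_eq_mul] at this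
    have h2 : ∫ y in Ioi (0:ℝ), rexp (-(1/2 * y)) = (1/2 : ℝ)⁻¹ * ∫ y in Ioi (0:ℝ), rexp (-y) := by
      simpa using this
    rw [h2, integral_exp_neg_Ioi_zero]
    norm_num
  · exact (by simpa [neg_mul] using exp_neg_integrableOn_Ioi 0 (show (0:ℝ) < 1/2 by norm_num) : IntegrableOn (fun y => rexp (-(1/2 * y))) (Ioi 0))
  · exact MeasureTheory.ae_of_all _ fun y => (exp_pos _).le

lemma aesm_exp_half (ν : MeasureTheory.Measure ℝ) :
    AEStronglyMeasurable (fun x : ℝ => rexp ((1/2) * x)) ν :=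
  ((Real.continuous_exp.comp (continuous_const.mul continuous_id)) :
    Continuous fun x : ℝ => rexp ((1/2) * x)).aestronglyMeasurable

lemma exp_half_integrable_expMeasure :
    MeasureTheory.Integrable (fun x => rexp ((1/2) * x)) (expMeasure 1) := by
  have : IsProbabilityMeasure (expMeasure 1) := isProbabilityMeasure_expMeasure one_pos
  constructor
  · exact (Real.continuous_exp.comp (continuous_const.mul continuous_id)).aestronglyMeasurable
  · rw [MeasureTheory.hasFiniteIntegral_iff_ofReal
      (MeasureTheory.ae_of_all _ fun x => (exp_pos _).le), expMeasure_lintegral_exp_half]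
    exact ENNReal.ofReal_lt_top

lemma expMeasure_integral_exp_half :
    ∫ x, rexp ((1/2) * x) ∂(expMeasure 1) = 2 := by
  have : IsProbabilityMeasure (expMeasure 1) := isProbabilityMeasure_expMeasure one_pos
  rw [MeasureTheory.integral_eq_lintegral_of_nonneg_ae
      (MeasureTheory.ae_of_all _ fun x => (exp_pos _).le)
      (aesm_exp_half _),
    expMeasure_lintegral_exp_half, ENNReal.toReal_ofReal (by norm_num)]

end AuxExp

open Set in
set_option maxHeartbeats 1000000 in
theorem stmt6 {Ω : Type*} [MeasurableSpace Ω] (μ : Measure Ω) [IsProbabilityMeasure μ]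
    (α : ℝ) (hα : α ∈ Set.Ioo (0:ℝ) 1) (ε : ℝ) (hε : ε ∈ Set.Ioo (0:ℝ) 1)
    (E : ℕ → Ω → ℝ) (hEmeas : ∀ k, Measurable (E k))
    (hEindep : iIndepFun E μ)
    (hEdist : ∀ k, Measure.map (E k) μ = expMeasure 1) :
    ∃ c > (0:ℝ), ∀ᶠ n : ℕ in atTop,
      μ {ω | (n : ℝ) ^ (α / (1 - α) + ε)
              ≤ tauPoly α E (n + 1) ω - tauPoly α E n ω + 1}
        ≤ ENNReal.ofReal (3 * Real.exp (-c * (n : ℝ) ^ ε)) := by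
  obtain ⟨hα0, hα1⟩ := hα
  obtain ⟨hε0, hε1⟩ := hε
  have h1α : (0:ℝ) < 1 - α := by linarith
  set p : ℝ := 1 / (1 - α) with hp
  have hp1 : 1 < p := by rw [hp, lt_div_iff₀ h1α]; linarith
  have hpm1 : p - 1 = α / (1 - α) := by rw [hp]; field_simp; ring
  have hKpos0 : (1:ℝ) < (2:ℝ) ^ p := by
    calc (1:ℝ) = (2:ℝ) ^ (0:ℝ) := by simp
    _ < 2 ^ p := by
        apply Real.rpow_lt_rpow_left_iff (x := 2) (by norm_num) |>.2
        linarith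
  set K : ℝ := ((2:ℝ)^p - 1) * (2*(1-α))^(p-1) * (1-α) with hK
  have hKpos : 0 < K := by
    apply mul_pos (mul_pos (by linarith) _) h1α
    exact Real.rpow_pos_of_pos (by linarith) _
  set c : ℝ := min (1/(2*K)) (1 - Real.log 2) with hc
  have hlog2 : Real.log 2 < 1 := by nlinarith [Real.log_two_lt_d9]
  have hcpos : 0 < c := lt_min (by positivity) (by linarith)
  refine ⟨c, hcpos, ?_⟩
  have htend : Tendsto (fun n : ℕ => (n:ℝ) ^ ε) atTop atTop :=
    (tendsto_rpow_atTop hε0).comp tendsto_natCast_atTop_atTop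
  filter_upwards [htend.eventually_gt_atTop 2, eventually_ge_atTop 1] with n hn2 hn1
  have hn1' : (1:ℝ) ≤ (n:ℝ) := by exact_mod_cast hn1
  have hn0 : (0:ℝ) < (n:ℝ) := by linarith
  -- subset of bad events
  have hsub : {ω | (n:ℝ) ^ (α / (1 - α) + ε) ≤ tauPoly α E (n+1) ω - tauPoly α E n ω + 1}
      ⊆ (⋃ i, {ω | E i ω < 0}) ∪
        ({ω | 2*(n:ℝ) ≤ ∑ i ∈ Finset.range (n+1), E i ω} ∪ {ω | c * (n:ℝ)^ε ≤ E n ω}) := by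
    intro ω hω
    by_contra hmem
    simp only [Set.mem_union, Set.mem_iUnion, Set.mem_setOf_eq, not_or, not_exists,
      not_lt, not_le] at hmem
    obtain ⟨hpos, hS, hEn⟩ := hmem
    simp only [Set.mem_setOf_eq] at hω
    set a : ℝ := (1-α) * ∑ i ∈ Finset.range n, E i ω with hadef
    set b : ℝ := (1-α) * ∑ i ∈ Finset.range (n+1), E i ω with hbdef
    have hsum0 : 0 ≤ ∑ i ∈ Finset.range n, E i ω := Finset.sum_nonneg fun i _ => hpos i
    have ha0 : 0 ≤ a := mul_nonneg h1α.le hsum0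
    have hdiffba : b - a = (1-α) * E n ω := by
      rw [hadef, hbdef, Finset.sum_range_succ]; ring
    have hble : a ≤ b := by nlinarith [hpos n]
    have hb0 : 0 ≤ b := ha0.trans hble
    have htau1 : tauPoly α E (n+1) ω = b ^ p := by
      unfold tauPoly; rw [← hbdef, ← hp]
    have htau2 : tauPoly α E n ω = a ^ p := by
      unfold tauPoly; rw [← hadef, ← hp]
    have hbub : b ≤ 2*(1-α)*(n:ℝ) := by nlinarith [hS.le]
    have hbaub : b - a ≤ (1-α) * (c * (n:ℝ)^ε) := by
      rw [hdiffba]; nlinarith [hEn.le]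
    have step1 : b ^ p - a ^ p ≤ ((2:ℝ)^p - 1) * b ^ (p-1) * (b - a) :=
      rpow_sub_rpow_le_slope hp1.le ha0 hble
    have step2 : ((2:ℝ)^p - 1) * b ^ (p-1) * (b - a)
        ≤ ((2:ℝ)^p - 1) * (2*(1-α)*(n:ℝ)) ^ (p-1) * ((1-α) * (c * (n:ℝ)^ε)) := by
      have hbp : b ^ (p-1) ≤ (2*(1-α)*(n:ℝ)) ^ (p-1) :=
        Real.rpow_le_rpow hb0 hbub (by linarith)
      have hba0 : 0 ≤ b - a := by linarith
      refine mul_le_mul (mul_le_mul_of_nonneg_left hbp (by linarith)) hbaub hba0 ?_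
      exact mul_nonneg (by linarith) (Real.rpow_nonneg (by positivity) _)
    have hsplit : (2*(1-α)*(n:ℝ)) ^ (p-1) = (2*(1-α)) ^ (p-1) * (n:ℝ) ^ (p-1) :=
      Real.mul_rpow (by linarith) hn0.le
    have hnθ : (n:ℝ) ^ (p-1) * (n:ℝ) ^ ε = (n:ℝ) ^ (α / (1-α) + ε) := by
      rw [← Real.rpow_add hn0, hpm1]
    have step3 : ((2:ℝ)^p - 1) * (2*(1-α)*(n:ℝ)) ^ (p-1) * ((1-α) * (c * (n:ℝ)^ε))
        = K * c * ((n:ℝ) ^ (α / (1-α) + ε)) := by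
      rw [hsplit, ← hnθ, hK]; ring
    have hKc : K * c ≤ 1/2 := by
      have h5 : c ≤ 1/(2*K) := min_le_left _ _
      calc K * c ≤ K * (1/(2*K)) := mul_le_mul_of_nonneg_left h5 hKpos.le
      _ = 1/2 := by field_simp
    have hθε : (n:ℝ) ^ ε ≤ (n:ℝ) ^ (α / (1-α) + ε) := by
      apply Real.rpow_le_rpow_of_exponent_le hn1'
      have : 0 ≤ α / (1-α) := by positivity
      linarith
    have hnθ2 : 2 < (n:ℝ) ^ (α / (1-α) + ε) := lt_of_lt_of_le hn2 hθε
    have hnθ0 : 0 ≤ (n:ℝ) ^ (α / (1-α) + ε) := Real.rpow_nonneg hn0.le _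
    have hfinal : tauPoly α E (n+1) ω - tauPoly α E n ω + 1 < (n:ℝ) ^ (α / (1-α) + ε) := by
      rw [htau1, htau2]
      have h4 : b ^ p - a ^ p ≤ K * c * ((n:ℝ) ^ (α / (1-α) + ε)) := by
        rw [← step3]; exact step1.trans step2
      nlinarith
    exact absurd hω (not_le.2 hfinal)
  -- measure of the null part
  have hN : μ (⋃ i, {ω | E i ω < 0}) = 0 := by
    refine measure_iUnion_null fun i => ?_
    have h2 := Measure.map_apply (μ := μ) (hEmeas i) (measurableSet_Iio (a := (0:ℝ)))
    rw [hEdist i] at h2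
    rw [show {ω | E i ω < 0} = E i ⁻¹' (Iio 0) from rfl, ← h2, expMeasure_Iio_zero]
  -- single exponential tail
  have hA2 : μ {ω | c * (n:ℝ)^ε ≤ E n ω} = ENNReal.ofReal (rexp (-(c * (n:ℝ)^ε))) := by
    have h2 := Measure.map_apply (μ := μ) (hEmeas n) (measurableSet_Ici (a := c * (n:ℝ)^ε))
    rw [hEdist n] at h2
    rw [show {ω | c * (n:ℝ)^ε ≤ E n ω} = E n ⁻¹' (Ici (c * (n:ℝ)^ε)) from rfl, ← h2,
      expMeasure_Ici_aux (by positivity)]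
  -- Chernoff for the sum
  have hint : ∀ i ∈ Finset.range (n+1),
      MeasureTheory.Integrable (fun ω => rexp ((1/2) * E i ω)) μ := by
    intro i _
    have hg : MeasureTheory.Integrable (fun x => rexp ((1/2) * x)) (Measure.map (E i) μ) := by
      rw [hEdist i]; exact exp_half_integrable_expMeasure
    exact (MeasureTheory.integrable_map_measure
      (Real.continuous_exp.comp (continuous_const.mul continuous_id)).aestronglyMeasurable
      (hEmeas i).aemeasurable).mp hg
  have hintS := hEindep.integrable_exp_mul_sum hEmeas hint
  have hmgf : mgf (∑ i ∈ Finset.range (n+1), E i) μ (1/2) = 2 ^ (n+1) := by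
    rw [hEindep.mgf_sum hEmeas]
    have hone : ∀ i, mgf (E i) μ (1/2) = 2 := by
      intro i
      rw [mgf, ← MeasureTheory.integral_map (hEmeas i).aemeasurable
        (aesm_exp_half _),
        hEdist i]
      exact expMeasure_integral_exp_half
    calc ∏ i ∈ Finset.range (n+1), mgf (E i) μ (1/2)
        = ∏ _i ∈ Finset.range (n+1), (2:ℝ) := Finset.prod_congr rfl fun i _ => hone i
      _ = 2 ^ (n+1) := by rw [Finset.prod_const, Finset.card_range]
  have hcher := measure_ge_le_exp_mul_mgf (X := ∑ i ∈ Finset.range (n+1), E i) (μ := μ)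
      (2*(n:ℝ)) (by norm_num : (0:ℝ) ≤ 1/2) hintS
  rw [hmgf] at hcher
  have hA1 : μ {ω | 2*(n:ℝ) ≤ ∑ i ∈ Finset.range (n+1), E i ω}
      ≤ ENNReal.ofReal (2 * rexp (-c * (n:ℝ)^ε)) := by
    rw [ENNReal.le_ofReal_iff_toReal_le (measure_ne_top μ _) (by positivity)]
    have hset : {ω | 2*(n:ℝ) ≤ ∑ i ∈ Finset.range (n+1), E i ω}
        = {ω | 2*(n:ℝ) ≤ (∑ i ∈ Finset.range (n+1), E i) ω} := by
      simp [Finset.sum_apply]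
    rw [hset]
    refine hcher.trans ?_
    have h2n : ((2:ℝ)) ^ (n+1) = 2 * rexp ((n:ℝ) * Real.log 2) := by
      rw [Real.exp_nat_mul, Real.exp_log (by norm_num : (0:ℝ) < 2), pow_succ]
      ring
    rw [h2n]
    have hexp : rexp (-(1/2) * (2*(n:ℝ))) * (2 * rexp ((n:ℝ) * Real.log 2))
        = 2 * rexp ((n:ℝ) * Real.log 2 - (n:ℝ)) := by
      rw [Real.exp_sub]
      rw [show (-(1/2) * (2*(n:ℝ))) = -(n:ℝ) by ring, Real.exp_neg]
      field_simp
    rw [hexp]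
    have harg : (n:ℝ) * Real.log 2 - (n:ℝ) ≤ -c * (n:ℝ)^ε := by
      have hc2 : c ≤ 1 - Real.log 2 := min_le_right _ _
      have hnε : (n:ℝ)^ε ≤ (n:ℝ) := by
        calc (n:ℝ)^ε ≤ (n:ℝ)^(1:ℝ) := Real.rpow_le_rpow_of_exponent_le hn1' hε1.le
        _ = (n:ℝ) := Real.rpow_one _
      have hnε0 : 0 ≤ (n:ℝ)^ε := Real.rpow_nonneg hn0.le _
      nlinarith
    have := Real.exp_le_exp.2 harg
    nlinarith [Real.exp_pos (-c * (n:ℝ)^ε)]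
  calc μ {ω | (n:ℝ) ^ (α / (1 - α) + ε) ≤ tauPoly α E (n+1) ω - tauPoly α E n ω + 1}
      ≤ μ ((⋃ i, {ω | E i ω < 0}) ∪
        ({ω | 2*(n:ℝ) ≤ ∑ i ∈ Finset.range (n+1), E i ω} ∪ {ω | c * (n:ℝ)^ε ≤ E n ω})) :=
        measure_mono hsub
    _ ≤ μ (⋃ i, {ω | E i ω < 0}) +
        μ ({ω | 2*(n:ℝ) ≤ ∑ i ∈ Finset.range (n+1), E i ω} ∪ {ω | c * (n:ℝ)^ε ≤ E n ω}) :=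
        measure_union_le _ _
    _ ≤ 0 + (μ {ω | 2*(n:ℝ) ≤ ∑ i ∈ Finset.range (n+1), E i ω}
          + μ {ω | c * (n:ℝ)^ε ≤ E n ω}) := by
        rw [hN]
        exact add_le_add le_rfl (measure_union_le _ _)
    _ ≤ ENNReal.ofReal (2 * rexp (-c * (n:ℝ)^ε)) + ENNReal.ofReal (rexp (-c * (n:ℝ)^ε)) := by
        rw [zero_add]
        refine add_le_add hA1 ?_
        rw [hA2, neg_mul]
    _ = ENNReal.ofReal (3 * rexp (-c * (n:ℝ)^ε)) := by
        rw [← ENNReal.ofReal_add (by positivity) (by positivity)]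
        ring_nf
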